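/- Let f: R^d → R be L-smooth and bounded below by f(θ*). Consider iterates θ_{t+1} = θ_t − η_t·ĝ_t where E[ĝ_t | θ_t] satisfies ⟨E[ĝ_t|θ_t], ∇f(θ_t)⟩ ≥ μ||∇f(θ_t)||² and E[||ĝ_t||² | θ_t] ≤ ||∇f(θ_t)||² + σ², with 0 < μ ≤ 1. With step size η_t = μ/(L√(K·t)) for a constant K ≥ 1, it holds that min_{1≤t≤T} E[||∇f(θ_t)||²] ≤ ( 2√K·L·(f(θ_1) − f(θ*))/μ² + √K·σ²·(1 + log T) ) / √T. -/

import Mathlib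

open MeasureTheory
open scoped RealInnerProductSpace



lemma sgd_descent {d : ℕ} (f : EuclideanSpace ℝ (Fin d) → ℝ) (L : ℝ) (hL : 0 ≤ L)
    (hf : ContDiff ℝ 1 f) (hlip : ∀ x y, ‖gradient f x - gradient f y‖ ≤ L * ‖x - y‖)
    (x y : EuclideanSpace ℝ (Fin d)) :
    f y ≤ f x + ⟪gradient f x, y - x⟫ + L / 2 * ‖y - x‖ ^ 2 := by
  set v := y - x with hv
  have hdiff : Differentiable ℝ f := hf.differentiable one_ne_zero
  have hgradcont : Continuous (gradient f) := by
    have h1 : Continuous (fderiv ℝ f) := hf.continuous_fderiv one_ne_zero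
    exact (InnerProductSpace.toDual ℝ (EuclideanSpace ℝ (Fin d))).symm.continuous.comp h1
  have hinner_eq : ∀ z : EuclideanSpace ℝ (Fin d), ∀ w,
      ⟪gradient f z, w⟫ = fderiv ℝ f z w := by
    intro z w
    rw [gradient, InnerProductSpace.toDual_symm_apply]
  have hderiv : ∀ s : ℝ, HasDerivAt (fun s : ℝ => f (x + s • v))
      ⟪gradient f (x + s • v), v⟫ s := by
    intro s
    have h1 : HasDerivAt (fun s : ℝ => x + s • v) v s := by
      simpa using ((hasDerivAt_id s).smul_const v).const_add x
    have h2 : HasFDerivAt f (fderiv ℝ f (x + s • v)) (x + s • v) := (hdiff _).hasFDerivAt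
    have h3 := h2.comp_hasDerivAt s h1
    rw [hinner_eq]
    exact h3
  have hcont : Continuous (fun s : ℝ => ⟪gradient f (x + s • v), v⟫) := by
    exact (hgradcont.comp (by continuity)).inner continuous_const
  have hkey : ∫ s in (0:ℝ)..1, ⟪gradient f (x + s • v), v⟫ =
      f (x + (1:ℝ) • v) - f (x + (0:ℝ) • v) :=
    intervalIntegral.integral_eq_sub_of_hasDerivAt (fun s _ => hderiv s)
      (hcont.intervalIntegrable 0 1)
  have hmono : ∫ s in (0:ℝ)..1, ⟪gradient f (x + s • v), v⟫ ≤
      ∫ s in (0:ℝ)..1, (⟪gradient f x, v⟫ + L * s * ‖v‖ ^ 2) := by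
    apply intervalIntegral.integral_mono_on zero_le_one (hcont.intervalIntegrable 0 1)
      (((by fun_prop : Continuous fun s : ℝ => ⟪gradient f x, v⟫ + L * s * ‖v‖ ^ 2)).intervalIntegrable 0 1)
    intro s hs
    have hb : ⟪gradient f (x + s • v) - gradient f x, v⟫ ≤ L * s * ‖v‖ ^ 2 := by
      calc ⟪gradient f (x + s • v) - gradient f x, v⟫ ≤
          ‖gradient f (x + s • v) - gradient f x‖ * ‖v‖ := real_inner_le_norm _ _
        _ ≤ (L * ‖(x + s • v) - x‖) * ‖v‖ := by
            exact mul_le_mul_of_nonneg_right (hlip _ _) (norm_nonneg _)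
        _ = L * s * ‖v‖ ^ 2 := by
            rw [add_sub_cancel_left, norm_smul, Real.norm_eq_abs, abs_of_nonneg hs.1]
            ring
    have := inner_sub_left (𝕜 := ℝ) (gradient f (x + s • v)) (gradient f x) v
    linarith [hb, this.symm.le, this.le]
  have hval : ∫ s in (0:ℝ)..1, (⟪gradient f x, v⟫ + L * s * ‖v‖ ^ 2) =
      ⟪gradient f x, v⟫ + L / 2 * ‖v‖ ^ 2 := by
    rw [intervalIntegral.integral_add (intervalIntegrable_const)
      (((by fun_prop : Continuous fun s : ℝ => L * s * ‖v‖ ^ 2)).intervalIntegrable 0 1)]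
    simp only [intervalIntegral.integral_const, smul_eq_mul]
    have : ∫ s in (0:ℝ)..1, L * s * ‖v‖ ^ 2 = L / 2 * ‖v‖ ^ 2 := by
      have : (fun s : ℝ => L * s * ‖v‖ ^ 2) = fun s : ℝ => (L * ‖v‖ ^ 2) * s := by
        funext s; ring
      rw [this, intervalIntegral.integral_const_mul, integral_id]
      ring
    rw [this]; ring
  have h10 : x + (1:ℝ) • v = y := by rw [one_smul, hv]; abel
  have h00 : x + (0:ℝ) • v = x := by rw [zero_smul, add_zero]
  rw [h10, h00] at hkey
  linarith [hkey, hmono, hval.le, hval.ge]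


lemma sgd_condexp_clm {Ω : Type*} {m m0 : MeasurableSpace Ω} (hm : m ≤ m0) (μ : Measure Ω)
    [IsFiniteMeasure μ] {E F : Type*} [NormedAddCommGroup E] [NormedSpace ℝ E] [CompleteSpace E]
    [NormedAddCommGroup F] [NormedSpace ℝ F] [CompleteSpace F]
    (T : E →L[ℝ] F) {g : Ω → E} (hg : Integrable g μ) :
    (fun ω => T ((μ[g|m]) ω)) =ᵐ[μ] μ[fun ω => T (g ω)|m] := by
  haveI : IsFiniteMeasure (μ.trim hm) := isFiniteMeasure_trim hm
  refine ae_eq_condExp_of_forall_setIntegral_eq hm ?_ ?_ ?_ ?_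
  · exact T.integrable_comp hg
  · exact fun s _ _ => (T.integrable_comp integrable_condExp).integrableOn
  · intro s hs hμs
    rw [T.integral_comp_comm integrable_condExp.integrableOn,
      T.integral_comp_comm hg.integrableOn, setIntegral_condExp hm hg hs]
  · exact (T.continuous.comp_stronglyMeasurable stronglyMeasurable_condExp).aestronglyMeasurable

lemma sgd_integrable_inner {Ω : Type*} {m0 : MeasurableSpace Ω} {μ : Measure Ω}
    {E : Type*} [NormedAddCommGroup E] [InnerProductSpace ℝ E]
    {f g : Ω → E} (hf : MemLp f 2 μ) (hg : MemLp g 2 μ) :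
    Integrable (fun ω => ⟪f ω, g ω⟫) μ := by
  have h := L2.integrable_inner (𝕜 := ℝ) (hf.toLp f) (hg.toLp g)
  refine h.congr ?_
  filter_upwards [hf.coeFn_toLp, hg.coeFn_toLp] with ω h1 h2
  rw [h1, h2]

lemma sgd_integrable_mul {Ω : Type*} {m0 : MeasurableSpace Ω} {μ : Measure Ω}
    {f g : Ω → ℝ} (hf : MemLp f 2 μ) (hg : MemLp g 2 μ) :
    Integrable (fun ω => f ω * g ω) μ := by
  have h := sgd_integrable_inner hf hg
  refine h.congr (Filter.Eventually.of_forall fun ω => ?_)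
  simp [RCLike.inner_apply, conj_trivial, mul_comm]

lemma sgd_condexp_inner {Ω : Type*} {m m0 : MeasurableSpace Ω} (hm : m ≤ m0) (μ : Measure Ω)
    [IsFiniteMeasure μ] {d : ℕ} {g X : Ω → EuclideanSpace ℝ (Fin d)}
    (hg : MemLp g 2 μ) (hX : StronglyMeasurable[m] X) (hX2 : MemLp X 2 μ) :
    (fun ω => ⟪(μ[g|m]) ω, X ω⟫) =ᵐ[μ] μ[fun ω => ⟪g ω, X ω⟫|m] := by
  have hgint : Integrable g μ := hg.integrable one_le_two
  have hgiL2 : ∀ i, MemLp (fun ω => g ω i) 2 μ := fun i =>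
    (EuclideanSpace.proj (𝕜 := ℝ) i).comp_memLp' hg
  have hXiL2 : ∀ i, MemLp (fun ω => X ω i) 2 μ := fun i =>
    (EuclideanSpace.proj (𝕜 := ℝ) i).comp_memLp' hX2
  have hgi : ∀ i, Integrable (fun ω => g ω i) μ := fun i => (hgiL2 i).integrable one_le_two
  have hXi : ∀ i, StronglyMeasurable[m] (fun ω => X ω i) := fun i =>
    (EuclideanSpace.proj (𝕜 := ℝ) i).continuous.comp_stronglyMeasurable hX
  have hXgi : ∀ i, Integrable (fun ω => X ω i * g ω i) μ := fun i =>
    sgd_integrable_mul (hXiL2 i) (hgiL2 i)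
  -- step 1 : coordinates of condexp
  have step1 : ∀ i, (fun ω => (μ[g|m]) ω i) =ᵐ[μ] μ[fun ω => g ω i|m] := fun i =>
    sgd_condexp_clm hm μ (EuclideanSpace.proj (𝕜 := ℝ) i) hgint
  -- step 2 : pull-out for products
  have step2 : ∀ i, (fun ω => X ω i * (μ[fun ω' => g ω' i|m]) ω) =ᵐ[μ]
      μ[fun ω => X ω i * g ω i|m] := by
    intro i
    have := condExp_mul_of_stronglyMeasurable_left (hXi i) (hXgi i) (hgi i)
    exact this.symm
  -- step 3 : sum of condexps
  have step3 : μ[fun ω => ∑ i, X ω i * g ω i|m] =ᵐ[μ]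
      fun ω => ∑ i, (μ[fun ω' => X ω' i * g ω' i|m]) ω := by
    have h := condExp_finsetSum (m := m) (μ := μ)
      (f := fun i ω => X ω i * g ω i) (s := Finset.univ) (fun i _ => hXgi i)
    have he : (fun ω => ∑ i, X ω i * g ω i) =
        ∑ i ∈ Finset.univ, (fun ω => X ω i * g ω i) := by
      funext ω; simp
    rw [he]
    refine h.trans (Filter.Eventually.of_forall fun ω => ?_)
    simp
  have hae1 : ∀ᵐ ω ∂μ, ∀ i, (μ[g|m]) ω i = (μ[fun ω' => g ω' i|m]) ω :=
    (ae_all_iff).mpr step1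
  have hae2 : ∀ᵐ ω ∂μ, ∀ i, X ω i * (μ[fun ω' => g ω' i|m]) ω =
      (μ[fun ω' => X ω' i * g ω' i|m]) ω := (ae_all_iff).mpr step2
  have hinner_eq : (fun ω => ⟪g ω, X ω⟫) = fun ω => ∑ i, X ω i * g ω i := by
    funext ω
    simp [PiLp.inner_apply, RCLike.inner_apply, conj_trivial, mul_comm]
  rw [hinner_eq]
  filter_upwards [hae1, hae2, step3] with ω h1 h2 h3
  calc ⟪(μ[g|m]) ω, X ω⟫ = ∑ i, X ω i * (μ[g|m]) ω i := by
        simp [PiLp.inner_apply, RCLike.inner_apply, conj_trivial, mul_comm]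
    _ = ∑ i, (μ[fun ω' => X ω' i * g ω' i|m]) ω := by
        refine Finset.sum_congr rfl fun i _ => ?_
        rw [h1 i, h2 i]
    _ = (μ[fun ω' => ∑ i, X ω' i * g ω' i|m]) ω := h3.symm


set_option maxHeartbeats 1000000 in
/-- Convergence of SGD-type updates with coherence-biased gradients: for `L`-smooth `f`
bounded below by `f θstar`, iterates `θ_{t+1} = θ_t - η_t • ĝ_t` with
`⟪E[ĝ_t|ℱ_t], ∇f(θ_t)⟫ ≥ μc ‖∇f(θ_t)‖²`, `E[‖ĝ_t‖²|ℱ_t] ≤ ‖∇f(θ_t)‖² + σ²`,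
`0 < μc ≤ 1`, and `η_t = μc/(L√(K t))`, the minimum expected squared gradient norm over
`t = 1, …, T` is at most `(2√K L (f θ₁ - f θstar)/μc² + √K σ² (1 + log T))/√T`. -/
theorem stmt7 {Ω : Type*} [m0 : MeasurableSpace Ω] (μ : Measure Ω) [IsProbabilityMeasure μ]
    {d : ℕ} (f : EuclideanSpace ℝ (Fin d) → ℝ) (L μc σ : ℝ) (K : ℕ)
    (hL : 0 < L) (hμc : 0 < μc) (hμc1 : μc ≤ 1) (hK : 1 ≤ K)
    (hf : ContDiff ℝ 1 f)
    (hlip : ∀ x y, ‖gradient f x - gradient f y‖ ≤ L * ‖x - y‖)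
    (θstar θ₀ : EuclideanSpace ℝ (Fin d)) (hbelow : ∀ x, f θstar ≤ f x)
    (θ gh : ℕ → Ω → EuclideanSpace ℝ (Fin d))
    (ℱ : ℕ → MeasurableSpace Ω) (hℱ : ∀ t, ℱ t ≤ m0)
    (hθ1 : θ 1 = fun _ => θ₀)
    (hθmeas : ∀ t, StronglyMeasurable[ℱ t] (θ t))
    (hghL2 : ∀ t, MemLp (gh t) 2 μ)
    (hupdate : ∀ t ≥ 1, θ (t + 1) =
      fun ω => θ t ω - (μc / (L * Real.sqrt (K * t))) • gh t ω)
    (hcoh : ∀ t ≥ 1, ∀ᵐ ω ∂μ,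
      μc * ‖gradient f (θ t ω)‖ ^ 2 ≤ ⟪(μ[gh t | ℱ t]) ω, gradient f (θ t ω)⟫)
    (hsecond : ∀ t ≥ 1, ∀ᵐ ω ∂μ,
      (μ[fun ω' => ‖gh t ω'‖ ^ 2 | ℱ t]) ω ≤ ‖gradient f (θ t ω)‖ ^ 2 + σ ^ 2)
    (T : ℕ) (hT : 1 ≤ T) (hne : (Finset.Icc 1 T).Nonempty) :
    (Finset.Icc 1 T).inf' hne (fun t => ∫ ω, ‖gradient f (θ t ω)‖ ^ 2 ∂μ) ≤
      (2 * Real.sqrt K * L * (f θ₀ - f θstar) / μc ^ 2 +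
        Real.sqrt K * σ ^ 2 * (1 + Real.log T)) / Real.sqrt T := by
  classical
  have hKR : (1:ℝ) ≤ (K:ℝ) := by exact_mod_cast hK
  have hTR : (1:ℝ) ≤ (T:ℝ) := by exact_mod_cast hT
  have hsK1 : 1 ≤ Real.sqrt K := by
    rw [show (1:ℝ) = Real.sqrt 1 from (Real.sqrt_one).symm]
    exact Real.sqrt_le_sqrt hKR
  have hsK0 : 0 < Real.sqrt K := lt_of_lt_of_le one_pos hsK1
  have hsT0 : 0 < Real.sqrt T := Real.sqrt_pos.mpr (by linarith)
  have hgradcont : Continuous (gradient f) := by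
    have h1 : Continuous (fderiv ℝ f) := hf.continuous_fderiv one_ne_zero
    exact (InnerProductSpace.toDual ℝ (EuclideanSpace ℝ (Fin d))).symm.continuous.comp h1
  have hfc : Continuous f := hf.continuous
  set G : ℕ → ℝ := fun t => ∫ ω, ‖gradient f (θ t ω)‖ ^ 2 ∂μ with hGdef
  set Fv : ℕ → ℝ := fun t => ∫ ω, f (θ t ω) ∂μ with hFdef
  -- θ is in L²
  have hθL2 : ∀ t, 1 ≤ t → MemLp (θ t) 2 μ := by
    intro t ht
    induction t, ht using Nat.le_induction with
    | base => rw [hθ1]; exact memLp_const θ₀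
    | succ n hn ih =>
      rw [hupdate n hn]
      exact ih.sub ((hghL2 n).const_smul (μc / (L * Real.sqrt (K * n))))
  have hθm : ∀ t, AEStronglyMeasurable (θ t) μ := fun t =>
    ((hθmeas t).mono (hℱ t)).aestronglyMeasurable
  -- gradient along iterates is in L²
  have hgradL2 : ∀ t, 1 ≤ t → MemLp (fun ω => gradient f (θ t ω)) 2 μ := by
    intro t ht
    have hsm : AEStronglyMeasurable (fun ω => gradient f (θ t ω)) μ :=
      hgradcont.comp_aestronglyMeasurable (hθm t)
    have hb1 : MemLp (fun ω => θ t ω - θ₀) 2 μ := (hθL2 t ht).sub (memLp_const θ₀)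
    have hb2 : MemLp (fun ω => L * ‖θ t ω - θ₀‖) 2 μ := hb1.norm.const_mul L
    have hb : MemLp (fun ω => ‖gradient f θ₀‖ + L * ‖θ t ω - θ₀‖) 2 μ :=
      (memLp_const (‖gradient f θ₀‖)).add hb2
    refine MemLp.of_le hb hsm (Filter.Eventually.of_forall fun ω => ?_)
    have h1 : ‖gradient f (θ t ω)‖ ≤ ‖gradient f θ₀‖ + ‖gradient f (θ t ω) - gradient f θ₀‖ := by
      have := norm_sub_norm_le (gradient f (θ t ω)) (gradient f θ₀)
      linarith [this]
    have h2 := hlip (θ t ω) θ₀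
    have h3 : 0 ≤ L * ‖θ t ω - θ₀‖ := by positivity
    rw [Real.norm_eq_abs]
    rw [abs_of_nonneg (by positivity)]
    linarith
  have hgradsq : ∀ t, 1 ≤ t → Integrable (fun ω => ‖gradient f (θ t ω)‖ ^ 2) μ :=
    fun t ht => (hgradL2 t ht).norm.integrable_sq
  have hGnn : ∀ t, 0 ≤ G t := fun t => integral_nonneg fun ω => by positivity
  -- f along iterates is integrable
  have hfint : ∀ t, 1 ≤ t → Integrable (fun ω => f (θ t ω)) μ := by
    intro t ht
    have hsm : AEStronglyMeasurable (fun ω => f (θ t ω)) μ :=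
      hfc.comp_aestronglyMeasurable (hθm t)
    have hint : Integrable (fun ω =>
        |f θstar| + (|f θ₀| + ‖gradient f θ₀‖ * ‖θ t ω - θ₀‖ + L/2 * ‖θ t ω - θ₀‖ ^ 2)) μ := by
      refine (integrable_const _).add ?_
      refine (Integrable.add ((integrable_const _).add ?_) ?_)
      · exact (((hθL2 t ht).sub (memLp_const θ₀)).integrable one_le_two).norm.const_mul _
      · exact (((hθL2 t ht).sub (memLp_const θ₀)).norm.integrable_sq).const_mul _
    refine hint.mono' hsm (Filter.Eventually.of_forall fun ω => ?_)
    have hub := sgd_descent f L hL.le hf hlip θ₀ (θ t ω)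
    have hin := real_inner_le_norm (gradient f θ₀) (θ t ω - θ₀)
    have hlb := hbelow (θ t ω)
    rw [Real.norm_eq_abs, abs_le]
    constructor
    · have : -|f θstar| ≤ f θstar := neg_abs_le _
      nlinarith [norm_nonneg (θ t ω - θ₀), norm_nonneg (gradient f θ₀), abs_nonneg (f θ₀),
        sq_nonneg (‖θ t ω - θ₀‖)]
    · have : f θ₀ ≤ |f θ₀| := le_abs_self _
      nlinarith [abs_nonneg (f θstar), norm_nonneg (θ t ω - θ₀), sq_nonneg (‖θ t ω - θ₀‖)]
  -- per-step descent inequality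
  have step : ∀ t, 1 ≤ t → Fv (t+1) ≤ Fv t
      - μc ^ 2 / (2 * L * Real.sqrt ((K:ℝ) * t)) * G t
      + μc ^ 2 * σ ^ 2 / (2 * L * ((K:ℝ) * t)) := by
    intro t ht
    have htR : (1:ℝ) ≤ (t:ℝ) := by exact_mod_cast ht
    have hKt1 : (1:ℝ) ≤ (K:ℝ) * t := le_trans hKR (le_mul_of_one_le_right (by linarith) htR)
    have hKt0 : (0:ℝ) < (K:ℝ) * t := by linarith
    have hs0 : 0 < Real.sqrt ((K:ℝ) * t) := Real.sqrt_pos.mpr hKt0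
    have hss : Real.sqrt ((K:ℝ) * t) ≤ (K:ℝ) * t := by
      have h1 : Real.sqrt ((K:ℝ) * t) ≤ Real.sqrt (((K:ℝ) * t) ^ 2) :=
        Real.sqrt_le_sqrt (by nlinarith)
      rwa [Real.sqrt_sq hKt0.le] at h1
    set η := μc / (L * Real.sqrt ((K:ℝ) * t)) with hηdef
    have hηpos : 0 < η := div_pos hμc (mul_pos hL hs0)
    have hη2 : η ^ 2 = μc ^ 2 / (L ^ 2 * ((K:ℝ) * t)) := by
      rw [hηdef, div_pow, mul_pow, Real.sq_sqrt hKt0.le]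
    -- pointwise descent
    have hpt : ∀ ω, f (θ (t+1) ω) ≤ f (θ t ω)
        - η * ⟪gh t ω, gradient f (θ t ω)⟫ + L/2 * η ^ 2 * ‖gh t ω‖ ^ 2 := by
      intro ω
      have hθ' : θ (t+1) ω = θ t ω - η • gh t ω := by rw [hupdate t ht]
      have hd := sgd_descent f L hL.le hf hlip (θ t ω) (θ (t+1) ω)
      rw [hθ'] at hd ⊢
      have harg : (θ t ω - η • gh t ω) - θ t ω = -(η • gh t ω) := by abel
      rw [harg, inner_neg_right, real_inner_smul_right, norm_neg, norm_smul,
        Real.norm_eq_abs, abs_of_pos hηpos, mul_pow,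
        real_inner_comm (gh t ω) (gradient f (θ t ω))] at hd
      refine hd.trans_eq ?_
      ring
    -- integrate
    have hinner_int : Integrable (fun ω => ⟪gh t ω, gradient f (θ t ω)⟫) μ :=
      sgd_integrable_inner (hghL2 t) (hgradL2 t ht)
    have hghsq : Integrable (fun ω => ‖gh t ω‖ ^ 2) μ := (hghL2 t).norm.integrable_sq
    have hrhs_int : Integrable (fun ω => f (θ t ω)
        - η * ⟪gh t ω, gradient f (θ t ω)⟫ + L/2 * η ^ 2 * ‖gh t ω‖ ^ 2) μ :=
      ((hfint t ht).sub (hinner_int.const_mul η)).add (hghsq.const_mul (L/2 * η ^ 2))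
    have hFle : Fv (t+1) ≤ Fv t - η * (∫ ω, ⟪gh t ω, gradient f (θ t ω)⟫ ∂μ)
        + L/2 * η ^ 2 * (∫ ω, ‖gh t ω‖ ^ 2 ∂μ) := by
      have hmono := integral_mono (hfint (t+1) (by omega)) hrhs_int hpt
      have hint1 : Integrable (fun ω => f (θ t ω)
          - η * ⟪gh t ω, gradient f (θ t ω)⟫) μ :=
        (hfint t ht).sub (hinner_int.const_mul η)
      have hint2 : Integrable (fun ω => L/2 * η ^ 2 * ‖gh t ω‖ ^ 2) μ :=
        hghsq.const_mul _
      have hint3 : Integrable (fun ω => η * ⟪gh t ω, gradient f (θ t ω)⟫) μ :=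
        hinner_int.const_mul η
      rwa [integral_add hint1 hint2, integral_sub (hfint t ht) hint3,
        integral_const_mul, integral_const_mul] at hmono
    -- bound on the inner-product term via conditional expectation
    have hXsm : StronglyMeasurable[ℱ t] (fun ω => gradient f (θ t ω)) :=
      hgradcont.comp_stronglyMeasurable (hθmeas t)
    have hcd := sgd_condexp_inner (hℱ t) μ (hghL2 t) hXsm (hgradL2 t ht)
    have hcondint : Integrable (fun ω => ⟪(μ[gh t|ℱ t]) ω, gradient f (θ t ω)⟫) μ :=
      integrable_condExp.congr hcd.symm
    have hA : μc * G t ≤ ∫ ω, ⟪gh t ω, gradient f (θ t ω)⟫ ∂μ := by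
      have h1 : μc * G t = ∫ ω, μc * ‖gradient f (θ t ω)‖ ^ 2 ∂μ :=
        (integral_const_mul _ _).symm
      have h2 : ∫ ω, μc * ‖gradient f (θ t ω)‖ ^ 2 ∂μ ≤
          ∫ ω, ⟪(μ[gh t|ℱ t]) ω, gradient f (θ t ω)⟫ ∂μ :=
        integral_mono_ae ((hgradsq t ht).const_mul μc) hcondint (hcoh t ht)
      have h3 : ∫ ω, ⟪(μ[gh t|ℱ t]) ω, gradient f (θ t ω)⟫ ∂μ =
          ∫ ω, ⟪gh t ω, gradient f (θ t ω)⟫ ∂μ := by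
        rw [integral_congr_ae hcd, integral_condExp (hℱ t)]
      linarith [h1, h2, h3]
    -- bound on the second moment
    have hB : ∫ ω, ‖gh t ω‖ ^ 2 ∂μ ≤ G t + σ ^ 2 := by
      have h1 : ∫ ω, ‖gh t ω‖ ^ 2 ∂μ =
          ∫ ω, (μ[fun ω' => ‖gh t ω'‖ ^ 2|ℱ t]) ω ∂μ := (integral_condExp (hℱ t)).symm
      have h2 : ∫ ω, (μ[fun ω' => ‖gh t ω'‖ ^ 2|ℱ t]) ω ∂μ ≤
          ∫ ω, (‖gradient f (θ t ω)‖ ^ 2 + σ ^ 2) ∂μ :=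
        integral_mono_ae integrable_condExp ((hgradsq t ht).add (integrable_const _))
          (hsecond t ht)
      have h3 : ∫ ω, (‖gradient f (θ t ω)‖ ^ 2 + σ ^ 2) ∂μ = G t + σ ^ 2 := by
        rw [integral_add (hgradsq t ht) (integrable_const _), integral_const]
        simp [measure_univ]
        rfl
      linarith
    -- numerical part
    have e1 : η * (μc * G t) ≤ η * ∫ ω, ⟪gh t ω, gradient f (θ t ω)⟫ ∂μ :=
      mul_le_mul_of_nonneg_left hA hηpos.le
    have e2 : L/2 * η ^ 2 * (∫ ω, ‖gh t ω‖ ^ 2 ∂μ) ≤ L/2 * η ^ 2 * (G t + σ ^ 2) :=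
      mul_le_mul_of_nonneg_left hB (by positivity)
    have hcoef : μc ^ 2 / (2 * L * Real.sqrt ((K:ℝ) * t)) ≤ η * μc - L/2 * η ^ 2 := by
      have hημc : η * μc = μc ^ 2 / (L * Real.sqrt ((K:ℝ) * t)) := by
        rw [hηdef]; field_simp
      have hLη2 : L/2 * η ^ 2 = μc ^ 2 / (2 * L * ((K:ℝ) * t)) := by
        rw [hη2]; field_simp
      have hd1 : μc ^ 2 / (2 * L * ((K:ℝ) * t)) ≤ μc ^ 2 / (2 * L * Real.sqrt ((K:ℝ) * t)) := by
        apply div_le_div_of_nonneg_left (by positivity) (by positivity)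
        nlinarith [mul_le_mul_of_nonneg_left hss (by positivity : (0:ℝ) ≤ 2*L)]
      have hd2 : μc ^ 2 / (L * Real.sqrt ((K:ℝ) * t))
          - μc ^ 2 / (2 * L * Real.sqrt ((K:ℝ) * t))
          = μc ^ 2 / (2 * L * Real.sqrt ((K:ℝ) * t)) := by
        field_simp
        ring
      linarith [hd1, hd2, hημc.le, hημc.ge, hLη2.le, hLη2.ge]
    have hσeq : L/2 * η ^ 2 * σ ^ 2 = μc ^ 2 * σ ^ 2 / (2 * L * ((K:ℝ) * t)) := by
      rw [hη2]; field_simp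
    have hcoefG : μc ^ 2 / (2 * L * Real.sqrt ((K:ℝ) * t)) * G t ≤ (η * μc - L/2 * η ^ 2) * G t :=
      mul_le_mul_of_nonneg_right hcoef (hGnn t)
    ring_nf at hFle e1 e2 hcoefG hσeq ⊢
    linarith [hFle, e1, e2, hcoefG, hσeq.le, hσeq.ge]
  -- telescoping sum
  have hsum : ∀ n, Fv (n+1) + ∑ t ∈ Finset.Icc 1 n,
      μc ^ 2 / (2 * L * Real.sqrt ((K:ℝ) * t)) * G t ≤
      Fv 1 + ∑ t ∈ Finset.Icc 1 n, μc ^ 2 * σ ^ 2 / (2 * L * ((K:ℝ) * t)) := by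
    intro n
    induction n with
    | zero => simp
    | succ n ih =>
      rw [Finset.sum_Icc_succ_top (by omega : 1 ≤ n + 1),
        Finset.sum_Icc_succ_top (by omega : 1 ≤ n + 1)]
      have hst := step (n+1) (by omega)
      push_cast at hst ⊢
      linarith
  have hF1 : Fv 1 = f θ₀ := by
    rw [hFdef]; simp only [hθ1]; simp [measure_univ]
  have hFT : f θstar ≤ Fv (T+1) := by
    have h1 : f θstar = ∫ _ω, f θstar ∂μ := by simp [measure_univ]
    rw [hFdef, h1]
    exact integral_mono (integrable_const _) (hfint (T+1) (by omega)) fun ω => hbelow _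
  have key : ∑ t ∈ Finset.Icc 1 T, μc ^ 2 / (2 * L * Real.sqrt ((K:ℝ) * t)) * G t ≤
      (f θ₀ - f θstar) + ∑ t ∈ Finset.Icc 1 T, μc ^ 2 * σ ^ 2 / (2 * L * ((K:ℝ) * t)) := by
    have := hsum T
    linarith [hF1.le, hF1.ge, hFT]
  -- the minimum
  set m := (Finset.Icc 1 T).inf' hne G with hmdef
  have hm0 : 0 ≤ m := by
    obtain ⟨t₀, ht₀, hmeq⟩ := Finset.exists_mem_eq_inf' hne G
    rw [hmdef, hmeq]; exact hGnn t₀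
  have hmle : ∀ t ∈ Finset.Icc 1 T, m ≤ G t := fun t htm => Finset.inf'_le _ htm
  -- lower bound for each summand
  have hsum_lb : (T:ℝ) * (μc ^ 2 / (2 * L * (Real.sqrt K * Real.sqrt T)) * m) ≤
      ∑ t ∈ Finset.Icc 1 T, μc ^ 2 / (2 * L * Real.sqrt ((K:ℝ) * t)) * G t := by
    have hterm : ∀ t ∈ Finset.Icc 1 T,
        μc ^ 2 / (2 * L * (Real.sqrt K * Real.sqrt T)) * m ≤
        μc ^ 2 / (2 * L * Real.sqrt ((K:ℝ) * t)) * G t := by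
      intro t htm
      rw [Finset.mem_Icc] at htm
      have h1R : (1:ℝ) ≤ (t:ℝ) := by exact_mod_cast htm.1
      have htT : (t:ℝ) ≤ (T:ℝ) := by exact_mod_cast htm.2
      have hsplit : Real.sqrt ((K:ℝ) * t) = Real.sqrt K * Real.sqrt t :=
        Real.sqrt_mul (by positivity) _
      have hst : Real.sqrt t ≤ Real.sqrt T := Real.sqrt_le_sqrt htT
      have hstpos : 0 < Real.sqrt t := Real.sqrt_pos.mpr (by linarith)
      have hc : μc ^ 2 / (2 * L * (Real.sqrt K * Real.sqrt T)) ≤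
          μc ^ 2 / (2 * L * Real.sqrt ((K:ℝ) * t)) := by
        rw [hsplit]
        apply div_le_div_of_nonneg_left (by positivity) (by positivity)
        have : Real.sqrt K * Real.sqrt t ≤ Real.sqrt K * Real.sqrt T :=
          mul_le_mul_of_nonneg_left hst hsK0.le
        nlinarith [hL]
      exact mul_le_mul hc (hmle t (Finset.mem_Icc.mpr htm)) hm0 (by positivity)
    have hcard : ((Finset.Icc 1 T).card : ℝ) = (T:ℝ) := by
      rw [Nat.card_Icc]; push_cast; ring
    calc (T:ℝ) * (μc ^ 2 / (2 * L * (Real.sqrt K * Real.sqrt T)) * m)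
        = ∑ _t ∈ Finset.Icc 1 T, μc ^ 2 / (2 * L * (Real.sqrt K * Real.sqrt T)) * m := by
          rw [Finset.sum_const, nsmul_eq_mul, hcard]
      _ ≤ _ := Finset.sum_le_sum hterm
  -- upper bound for the noise sum
  have hharm : ∑ t ∈ Finset.Icc 1 T, ((t:ℝ))⁻¹ ≤ 1 + Real.log T := by
    have h1 := harmonic_le_one_add_log T
    have h2 : ((harmonic T : ℚ) : ℝ) = ∑ t ∈ Finset.Icc 1 T, ((t:ℝ))⁻¹ := by
      rw [harmonic_eq_sum_Icc]; push_cast; ring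
    linarith [h2.le, h2.ge]
  have hnoise : ∑ t ∈ Finset.Icc 1 T, μc ^ 2 * σ ^ 2 / (2 * L * ((K:ℝ) * t)) ≤
      μc ^ 2 * σ ^ 2 / (2 * L * K) * (1 + Real.log T) := by
    have heach : ∀ t ∈ Finset.Icc 1 T, μc ^ 2 * σ ^ 2 / (2 * L * ((K:ℝ) * t)) =
        μc ^ 2 * σ ^ 2 / (2 * L * K) * ((t:ℝ))⁻¹ := by
      intro t htm
      rw [Finset.mem_Icc] at htm
      have h1R : (0:ℝ) < (t:ℝ) := by exact_mod_cast htm.1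
      rw [show 2 * L * ((K:ℝ) * t) = (2 * L * K) * t by ring, ← div_div, div_eq_mul_inv]
    rw [Finset.sum_congr rfl heach, ← Finset.mul_sum]
    exact mul_le_mul_of_nonneg_left hharm (by positivity)
  -- combine
  have hcomb : (T:ℝ) * (μc ^ 2 / (2 * L * (Real.sqrt K * Real.sqrt T)) * m) ≤
      (f θ₀ - f θstar) + μc ^ 2 * σ ^ 2 / (2 * L * K) * (1 + Real.log T) := by
    linarith [hsum_lb, key, hnoise]
  -- final algebra
  have hlhs_eq : (T:ℝ) * (μc ^ 2 / (2 * L * (Real.sqrt K * Real.sqrt T)) * m) =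
      m * Real.sqrt T * (μc ^ 2 / (2 * L * Real.sqrt K)) := by
    have h := Real.mul_self_sqrt (show (0:ℝ) ≤ (T:ℝ) by positivity)
    field_simp
    linear_combination (-m) * h
  have hlog0 : 0 ≤ 1 + Real.log T := by
    have := Real.log_nonneg hTR
    linarith
  rw [hmdef] at hcomb ⊢
  rw [le_div_iff₀ hsT0]
  -- goal : m * √T ≤ 2√K L Δ/μc² + √K σ² (1+log T)
  have hmain : m * Real.sqrt T ≤
      ((f θ₀ - f θstar) + μc ^ 2 * σ ^ 2 / (2 * L * K) * (1 + Real.log T)) *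
        (2 * L * Real.sqrt K / μc ^ 2) := by
    have h1 : m * Real.sqrt T = (m * Real.sqrt T * (μc ^ 2 / (2 * L * Real.sqrt K))) *
        (2 * L * Real.sqrt K / μc ^ 2) := by
      field_simp
    rw [h1]
    apply mul_le_mul_of_nonneg_right _ (by positivity)
    rw [← hlhs_eq]
    exact hcomb
  have h3 : ((f θ₀ - f θstar) + μc ^ 2 * σ ^ 2 / (2 * L * K) * (1 + Real.log T)) *
      (2 * L * Real.sqrt K / μc ^ 2) =
      2 * Real.sqrt K * L * (f θ₀ - f θstar) / μc ^ 2 +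
        Real.sqrt K * σ ^ 2 * (1 + Real.log T) / K := by
    field_simp
  have h4 : Real.sqrt K * σ ^ 2 * (1 + Real.log T) / K ≤
      Real.sqrt K * σ ^ 2 * (1 + Real.log T) :=
    div_le_self (by positivity) hKR
  linarith [hmain, h3.le, h3.ge, h4]
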